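/- Let N ≥ 1 and let Q be any coherent lower prevision on ℒ(𝒩^N). Then the lower prevision P on ℒ(𝒳^N) defined by P(f) := Q(m ↦ MuHy^N(f|m)) is coherent and exchangeable, and its count distribution h ↦ P(h∘T^N) coincides with Q. -/

import Mathlib

open Finset Filter Topology

/-- A coherent lower prevision on the gambles over a finite nonempty space `Ω`. -/
def LowerPrevCoherent {Ω : Type*} [Fintype Ω] [Nonempty Ω] (P : (Ω → ℝ) → ℝ) : Prop :=
  (∀ f : Ω → ℝ, sInf (Set.range f) ≤ P f) ∧
  (∀ (f : Ω → ℝ) (l : ℝ), 0 ≤ l → P (fun ω => l * f ω) = l * P f) ∧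
  (∀ f g : Ω → ℝ, P f + P g ≤ P (f + g))

/-- A linear prevision on the gambles over a finite nonempty space `Ω`. -/
def LinearPrevision {Ω : Type*} [Fintype Ω] [Nonempty Ω] (P : (Ω → ℝ) → ℝ) : Prop :=
  (∀ f g : Ω → ℝ, P (f + g) = P f + P g) ∧
  (∀ (l : ℝ) (f : Ω → ℝ), P (fun ω => l * f ω) = l * P f) ∧
  (∀ f : Ω → ℝ, (∀ ω, 0 ≤ f ω) → 0 ≤ P f) ∧
  P (fun _ => 1) = 1

/-- Exchangeability of a lower prevision on gambles on `X^N`: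
`P (πf − f) ≥ 0` for every gamble `f` and every permutation `π`. -/
def Exchangeable {X : Type*} {N : ℕ} (P : ((Fin N → X) → ℝ) → ℝ) : Prop :=
  ∀ (f : (Fin N → X) → ℝ) (π : Equiv.Perm (Fin N)),
    0 ≤ P (fun x => f (fun k => x (π k)) - f x)

/-- The set of count vectors `𝒩^n`. -/
abbrev CVec (X : Type*) [Fintype X] (n : ℕ) : Type _ := {m : X → ℕ // ∑ x, m x = n}

noncomputable instance {X : Type*} [Fintype X] [DecidableEq X] (n : ℕ) : Fintype (CVec X n) := by
  have key : ∀ (m : CVec X n) (x : X), m.1 x < n + 1 := by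
    intro m x
    have h1 : m.1 x ≤ ∑ y, m.1 y :=
      Finset.single_le_sum (fun i _ => Nat.zero_le _) (Finset.mem_univ x)
    have h2 := m.2
    omega
  exact Fintype.ofInjective (fun m : CVec X n => fun x => (⟨m.1 x, key m x⟩ : Fin (n+1)))
    (fun a b hab => Subtype.ext (funext fun x => congrArg Fin.val (congrFun hab x)))

instance {X : Type*} [Fintype X] [DecidableEq X] [Nonempty X] (n : ℕ) :
    Nonempty (CVec X n) :=
  ⟨⟨fun x => if x = Classical.arbitrary X then n else 0, by simp⟩⟩

/-- The counting map `T^n : X^n → 𝒩^n`. -/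
def countMap {X : Type*} [Fintype X] [DecidableEq X] (n : ℕ) (z : Fin n → X) : CVec X n :=
  ⟨fun x => (Finset.univ.filter fun k => z k = x).card, by
    have h := Finset.card_eq_sum_card_fiberwise (f := z) (s := Finset.univ) (t := Finset.univ)
      (fun k _ => Finset.mem_univ (z k))
    simpa using h.symm⟩

/-- `ν(m) = n!/∏ₓ mₓ!` for a count vector `m ∈ 𝒩^n`. -/
def nu {X : Type*} [Fintype X] {n : ℕ} (m : CVec X n) : ℕ :=
  Nat.multinomial Finset.univ m.1

/-- `ν(μ − m)`, which is `0` unless `m ≤ μ` componentwise. -/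
def nuSub {X : Type*} [Fintype X] {n k : ℕ} (μ : CVec X (n + k)) (m : CVec X n) : ℕ :=
  if ∀ x, m.1 x ≤ μ.1 x then Nat.multinomial Finset.univ (fun x => μ.1 x - m.1 x) else 0

/-- The multiple hyper-geometric prevision `MuHy^n(f|m) = (1/ν(m)) ∑_{z∈[m]} f(z)`. -/
noncomputable def MuHy {X : Type*} [Fintype X] [DecidableEq X] {n : ℕ}
    (f : (Fin n → X) → ℝ) (m : CVec X n) : ℝ :=
  (∑ z ∈ Finset.univ.filter fun z : Fin n → X => countMap n z = m, f z) / (nu m : ℝ)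

/-- The `X`-simplex `Σ_X`, as a subtype of `X → ℝ`. -/
abbrev SimplexPt (X : Type*) [Fintype X] : Type _ :=
  {θ : X → ℝ // (∀ x, 0 ≤ θ x) ∧ ∑ x, θ x = 1}

/-- The Bernstein basis polynomial `B_m(θ) = ν(m) ∏ₓ θₓ^{mₓ}`. -/
noncomputable def Bern {X : Type*} [Fintype X] {n : ℕ} (m : CVec X n) (θ : X → ℝ) : ℝ :=
  (nu m : ℝ) * ∏ x, θ x ^ m.1 x

/-- The count multinomial expectation `CoMn^n(g|θ) = ∑_m g(m) B_m(θ)`. -/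
noncomputable def CoMn {X : Type*} [Fintype X] [DecidableEq X] {n : ℕ} (g : CVec X n → ℝ) (θ : X → ℝ) : ℝ :=
  ∑ m : CVec X n, g m * Bern m θ

/-- The multinomial expectation `Mn^n(f|θ) = ∑_z f(z) ∏ₓ θₓ^{Tₓ(z)}`. -/
noncomputable def Mn {X : Type*} [Fintype X] [DecidableEq X] {n : ℕ}
    (f : (Fin n → X) → ℝ) (θ : X → ℝ) : ℝ :=
  ∑ z : Fin n → X, f z * ∏ x, θ x ^ (countMap n z).1 x

/-- `CoMn^n(g|·)` as a function on the simplex. -/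
noncomputable def CoMnP {X : Type*} [Fintype X] [DecidableEq X] {n : ℕ} (g : CVec X n → ℝ)
    (θ : SimplexPt X) : ℝ :=
  CoMn g θ.1

/-- `Mn^n(f|·)` as a function on the simplex. -/
noncomputable def MnP {X : Type*} [Fintype X] [DecidableEq X] {n : ℕ}
    (f : (Fin n → X) → ℝ) (θ : SimplexPt X) : ℝ :=
  Mn f θ.1

/-- Polynomial gambles on the simplex: the set `𝒱(Σ_X)`. -/
def IsPolyGamble {X : Type*} [Fintype X] [DecidableEq X] (p : SimplexPt X → ℝ) : Prop :=
  ∃ n : ℕ, 1 ≤ n ∧ ∃ g : CVec X n → ℝ, p = fun θ => CoMnP g θ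

/-- Coherence of a functional on the linear space `𝒱(Σ_X)` of polynomial gambles. -/
def CoherentOnPoly {X : Type*} [Fintype X] [DecidableEq X] (S : (SimplexPt X → ℝ) → ℝ) : Prop :=
  (∀ p, IsPolyGamble p → sInf (Set.range p) ≤ S p) ∧
  (∀ p, IsPolyGamble p → ∀ l : ℝ, 0 ≤ l → S (fun θ => l * p θ) = l * S p) ∧
  (∀ p q, IsPolyGamble p → IsPolyGamble q → S p + S q ≤ S (p + q))

/-- Cylindrical extension of a gamble on `X^n` to `X^{n+k}`. -/
def cylExt {X : Type*} {n k : ℕ} (f : (Fin n → X) → ℝ) : (Fin (n + k) → X) → ℝ :=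
  fun z => f fun i => z (Fin.castLE (Nat.le_add_right n k) i)

/-- Time consistency of a family of lower previsions on the `X^n`. -/
def PTimeConsistent {X : Type*} (P : ∀ n : ℕ, ((Fin n → X) → ℝ) → ℝ) : Prop :=
  ∀ n : ℕ, 1 ≤ n → ∀ (k : ℕ) (f : (Fin n → X) → ℝ), P n f = P (n + k) (cylExt f)

/-- Time consistency of a family of count lower previsions on the `𝒩^n`. -/
def QTimeConsistent {X : Type*} [Fintype X] [DecidableEq X] (Q : ∀ n : ℕ, (CVec X n → ℝ) → ℝ) : Prop :=
  ∀ n : ℕ, 1 ≤ n → ∀ (k : ℕ) (h : CVec X n → ℝ),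
    Q n h = Q (n + k) (fun μ => ∑ m : CVec X n, ((nuSub μ m : ℝ) * (nu m : ℝ) / (nu μ : ℝ)) * h m)

/-- The relative frequency vector `m/n ∈ Σ_X` of a count vector `m ∈ 𝒩^n`, `n ≥ 1`. -/
noncomputable def freqPt {X : Type*} [Fintype X] {n : ℕ} (hn : 0 < n) (m : CVec X n) :
    SimplexPt X :=
  ⟨fun x => (m.1 x : ℝ) / n,
   fun x => div_nonneg (Nat.cast_nonneg _) (Nat.cast_nonneg _),
   by
    rw [← Finset.sum_div]
    have h : (∑ x, (m.1 x : ℝ)) = (n : ℝ) := by exact_mod_cast m.2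
    rw [h]
    exact div_self (Nat.cast_ne_zero.mpr hn.ne')⟩

/-- `ḡ(μ) = ∑_m (ν(m) ν(μ−m) / ν(μ)) g(m)`. -/
noncomputable def gbar {X : Type*} [Fintype X] [DecidableEq X] {n k : ℕ}
    (g : CVec X n → ℝ) (μ : CVec X (n + k)) : ℝ :=
  ∑ m : CVec X n, ((nu m : ℝ) * (nuSub μ m : ℝ) / (nu μ : ℝ)) * g m


section Aux

lemma card_fiber {α : Type*} [Fintype α] [DecidableEq α] {n : ℕ} (m : CVec α n) :
    (Finset.univ.filter fun z : Fin n → α => countMap n z = m).card = nu m := by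
  classical
  set d : α →₀ ℕ := Finsupp.equivFunOnFinite.symm m.1 with hd
  have happ : ∀ (z : Fin n → α) (x : α),
      (∑ k : Fin n, Finsupp.single (z k) (1 : ℕ)) x = (countMap n z).1 x := by
    intro z x
    rw [Finsupp.finset_sum_apply]
    simp only [countMap]
    rw [Finset.card_filter]
    exact Finset.sum_congr rfl fun k _ => Finsupp.single_apply
  have hiff : ∀ z : Fin n → α,
      (∑ k : Fin n, Finsupp.single (z k) (1 : ℕ)) = d ↔ countMap n z = m := by
    intro z
    rw [DFunLike.ext_iff]
    constructor
    · intro h; apply Subtype.ext; funext x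
      have hx := h x
      rw [happ z x] at hx
      simpa [hd] using hx
    · intro h x
      rw [happ z x, h, hd]; simp
  have hmono : ∀ (s : Finset (Fin n)) (z : Fin n → α),
      (∏ k ∈ s, (MvPolynomial.X (z k) : MvPolynomial α ℕ)) =
        MvPolynomial.monomial (∑ k ∈ s, Finsupp.single (z k) 1) 1 := by
    intro s z
    induction s using Finset.cons_induction with
    | empty => simp
    | cons a s ha ih =>
      rw [Finset.prod_cons, Finset.sum_cons, ih, MvPolynomial.X,
        MvPolynomial.monomial_mul, one_mul]
  have hA : ((∑ x : α, (MvPolynomial.X x : MvPolynomial α ℕ)))^n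
      = ∑ z : Fin n → α, MvPolynomial.monomial (∑ k : Fin n, Finsupp.single (z k) 1) 1 := by
    have h1 : ((∑ x : α, (MvPolynomial.X x : MvPolynomial α ℕ)))^n
        = ∏ _k : Fin n, ∑ x : α, (MvPolynomial.X x : MvPolynomial α ℕ) := by
      rw [Finset.prod_const, Finset.card_univ, Fintype.card_fin]
    rw [h1, Finset.prod_univ_sum]
    refine Finset.sum_congr (by simp [Fintype.piFinset_univ]) fun z _ => hmono _ z
  have hcA : MvPolynomial.coeff d (((∑ x : α, (MvPolynomial.X x : MvPolynomial α ℕ)))^n)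
      = (Finset.univ.filter fun z : Fin n → α => countMap n z = m).card := by
    rw [hA, MvPolynomial.coeff_sum]
    simp only [MvPolynomial.coeff_monomial]
    rw [Finset.sum_boole, Nat.cast_id]
    congr 1
    exact Finset.filter_congr fun z _ => by simpa using hiff z
  have hcB : MvPolynomial.coeff d (((∑ x : α, (MvPolynomial.X x : MvPolynomial α ℕ)))^n)
      = nu m := by
    rw [Finset.sum_pow_eq_sum_piAntidiag]
    have hprod : ∀ k : α → ℕ, (∏ x : α, (MvPolynomial.X x : MvPolynomial α ℕ) ^ k x)
        = MvPolynomial.monomial (Finsupp.equivFunOnFinite.symm k) 1 := by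
      intro k
      rw [← MvPolynomial.prod_X_pow_eq_monomial,
        Finset.prod_subset (Finset.subset_univ ((Finsupp.equivFunOnFinite.symm k).support))
          (fun x _ hx => by
            have h0 := Finsupp.notMem_support_iff.mp hx
            simp only [Finsupp.coe_equivFunOnFinite_symm] at h0
            simp [h0])]
      exact Finset.prod_congr rfl fun x _ => by simp
    rw [MvPolynomial.coeff_sum]
    have hmem : m.1 ∈ Finset.piAntidiag Finset.univ n := by
      rw [Finset.mem_piAntidiag]
      exact ⟨m.2, fun i _ => Finset.mem_univ i⟩
    rw [Finset.sum_eq_single m.1]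
    · rw [hprod, ← nsmul_eq_mul, MvPolynomial.coeff_smul, ← hd,
        MvPolynomial.coeff_monomial, if_pos rfl]
      simp [nu]
    · intro k _ hk
      rw [hprod, ← nsmul_eq_mul, MvPolynomial.coeff_smul, MvPolynomial.coeff_monomial,
        if_neg, smul_zero]
      intro hkd
      exact hk (Finsupp.equivFunOnFinite.symm.injective (hkd.trans hd))
    · intro h; exact absurd hmem h
  rw [← hcA, hcB]

lemma nu_pos {α : Type*} [Fintype α] {n : ℕ} (m : CVec α n) : 0 < nu m :=
  Nat.multinomial_pos _ _

lemma MuHy_add {α : Type*} [Fintype α] [DecidableEq α] {n : ℕ}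
    (f g : (Fin n → α) → ℝ) (m : CVec α n) :
    MuHy (f + g) m = MuHy f m + MuHy g m := by
  simp only [MuHy, Pi.add_apply, Finset.sum_add_distrib, add_div]

lemma MuHy_sub {α : Type*} [Fintype α] [DecidableEq α] {n : ℕ}
    (f g : (Fin n → α) → ℝ) (m : CVec α n) :
    MuHy (fun z => f z - g z) m = MuHy f m - MuHy g m := by
  simp only [MuHy, Finset.sum_sub_distrib, sub_div]

lemma MuHy_smul {α : Type*} [Fintype α] [DecidableEq α] {n : ℕ}
    (l : ℝ) (f : (Fin n → α) → ℝ) (m : CVec α n) :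
    MuHy (fun z => l * f z) m = l * MuHy f m := by
  simp only [MuHy, ← Finset.mul_sum, mul_div_assoc]

lemma MuHy_count {α : Type*} [Fintype α] [DecidableEq α] {n : ℕ}
    (h : CVec α n → ℝ) (m : CVec α n) :
    MuHy (fun z => h (countMap n z)) m = h m := by
  have hne : (nu m : ℝ) ≠ 0 := by
    exact_mod_cast (nu_pos m).ne'
  rw [MuHy, Finset.sum_congr rfl (fun z hz => by
    rw [(Finset.mem_filter.mp hz).2])]
  rw [Finset.sum_const, card_fiber, nsmul_eq_mul]
  field_simp

lemma MuHy_inf_le {α : Type*} [Fintype α] [DecidableEq α] {n : ℕ}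
    (f : (Fin n → α) → ℝ) (m : CVec α n) :
    sInf (Set.range f) ≤ MuHy f m := by
  have hbdd : BddBelow (Set.range f) := (Set.finite_range f).bddBelow
  have hpos : (0 : ℝ) < (nu m : ℝ) := by exact_mod_cast nu_pos m
  rw [MuHy, le_div_iff₀ hpos]
  calc sInf (Set.range f) * (nu m : ℝ)
      = (Finset.univ.filter fun z : Fin n → α => countMap n z = m).card •
        sInf (Set.range f) := by
        rw [nsmul_eq_mul, card_fiber, mul_comm]
    _ ≤ ∑ z ∈ Finset.univ.filter fun z : Fin n → α => countMap n z = m, f z :=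
        Finset.card_nsmul_le_sum _ _ _ fun z _ => csInf_le hbdd ⟨z, rfl⟩

lemma countMap_perm {α : Type*} [Fintype α] [DecidableEq α] {n : ℕ}
    (z : Fin n → α) (π : Equiv.Perm (Fin n)) :
    countMap n (fun k => z (π k)) = countMap n z := by
  apply Subtype.ext; funext x
  simp only [countMap]
  refine Finset.card_bij (fun k _ => π k) (fun k hk => ?_) (fun a ha b hb hab => ?_)
    (fun j hj => ?_)
  · simp only [Finset.mem_filter, Finset.mem_univ, true_and] at hk ⊢
    exact hk
  · exact π.injective hab
  · refine ⟨π.symm j, ?_, by simp⟩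
    simp only [Finset.mem_filter, Finset.mem_univ, true_and] at hj ⊢
    simpa using hj

lemma MuHy_perm {α : Type*} [Fintype α] [DecidableEq α] {n : ℕ}
    (f : (Fin n → α) → ℝ) (π : Equiv.Perm (Fin n)) (m : CVec α n) :
    MuHy (fun z => f (fun k => z (π k))) m = MuHy f m := by
  unfold MuHy
  congr 1
  refine Finset.sum_nbij' (i := fun z => fun k => z (π k))
    (j := fun w => fun k => w (π.symm k)) ?_ ?_ ?_ ?_ ?_
  · intro z hz
    simp only [Finset.mem_filter, Finset.mem_univ, true_and] at hz ⊢
    rw [countMap_perm z π]; exact hz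
  · intro w hw
    simp only [Finset.mem_filter, Finset.mem_univ, true_and] at hw ⊢
    rw [countMap_perm w π.symm]; exact hw
  · intro z _; funext k; simp
  · intro w _; funext k; simp
  · intro z _; rfl

end Aux

/-- for any coherent `Q` on `ℒ(𝒩^N)`, the lower prevision
`P(f) := Q(MuHy^N(f|·))` is coherent and exchangeable, with count distribution `Q`. -/
theorem stmt5 {X : Type*} [Fintype X] [DecidableEq X] [Nonempty X] {N : ℕ} (hN : 1 ≤ N)
    (Q : (CVec X N → ℝ) → ℝ) (hQ : LowerPrevCoherent Q)
    (P : ((Fin N → X) → ℝ) → ℝ)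
    (hP : ∀ f : (Fin N → X) → ℝ, P f = Q (fun m => MuHy f m)) :
    LowerPrevCoherent P ∧ Exchangeable P ∧
      ∀ h : CVec X N → ℝ, P (fun z => h (countMap N z)) = Q h := by
  have hQzero : Q (fun _ => 0) = 0 := by
    have := hQ.2.1 (fun _ => (0:ℝ)) 0 le_rfl
    simpa using this
  refine ⟨⟨?_, ?_, ?_⟩, ?_, ?_⟩
  · -- lower bound
    intro f
    rw [hP f]
    refine le_trans ?_ (hQ.1 _)
    refine le_csInf (Set.range_nonempty _) ?_
    rintro b ⟨m, rfl⟩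
    exact MuHy_inf_le f m
  · -- homogeneity
    intro f l hl
    rw [hP, hP]
    have : (fun m : CVec X N => MuHy (fun z => l * f z) m)
        = fun m => l * MuHy f m := funext fun m => MuHy_smul l f m
    rw [this, hQ.2.1 _ l hl]
  · -- superadditivity
    intro f g
    rw [hP, hP, hP]
    refine le_trans (hQ.2.2 _ _) (le_of_eq ?_)
    congr 1
    funext m
    exact (MuHy_add f g m).symm ▸ (by simp [MuHy_add])
  · -- exchangeability
    intro f π
    rw [hP]
    have : (fun m : CVec X N => MuHy (fun x => f (fun k => x (π k)) - f x) m)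
        = fun _ => (0:ℝ) := by
      funext m
      rw [MuHy_sub (fun x => f (fun k => x (π k))) f m, MuHy_perm f π m, sub_self]
    rw [this, hQzero]
  · -- count distribution
    intro h
    rw [hP]
    congr 1
    funext m
    exact MuHy_count h m
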